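/- Let k ≥ 2 and q ≥ 3 be integers. Then the characteristic polynomial Φ_{q,k}(t) = t^k − q t^{k−1} − t^{k−2} − ⋯ − t − 1 has exactly one positive real root γ, this root satisfies q < γ < q+1, and every other complex root of Φ_{q,k} has absolute value strictly less than 1. -/

import Mathlib

open Finset

-- key polynomial identity: (t-1) * Φ(t) = t^(j+1) * (t² - (c+1)t + (c-1)) + 1
lemma keyid {R : Type*} [CommRing R] (c t : R) (j : ℕ) :
    (t - 1) * (t ^ (j+2) - c * t ^ (j+1) - ∑ i ∈ range (j+1), t ^ i)
      = t ^ (j+1) * (t ^ 2 - (c+1) * t + (c-1)) + 1 := by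
  have h := geom_sum_mul t (j+1)
  linear_combination (-1 : R) * h

-- monotonicity comparison
lemma mono (c : ℝ) (j : ℕ) {x y : ℝ} (hx : 0 < x) (hxy : x < y) :
    (x ^ (j+2) - c * x ^ (j+1) - ∑ i ∈ range (j+1), x ^ i) * y ^ (j+1)
      < (y ^ (j+2) - c * y ^ (j+1) - ∑ i ∈ range (j+1), y ^ i) * x ^ (j+1) := by
  have hy : 0 < y := hx.trans hxy
  have h1 : x ^ (j+2) * y ^ (j+1) < y ^ (j+2) * x ^ (j+1) := by
    have := mul_lt_mul_of_pos_left hxy (pow_pos (mul_pos hx hy) (j+1))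
    calc x ^ (j+2) * y ^ (j+1) = (x*y)^(j+1) * x := by ring
    _ < (x*y)^(j+1) * y := this
    _ = y ^ (j+2) * x ^ (j+1) := by ring
  have h2 : (∑ i ∈ range (j+1), y ^ i) * x ^ (j+1) ≤ (∑ i ∈ range (j+1), x ^ i) * y ^ (j+1) := by
    rw [Finset.sum_mul, Finset.sum_mul]
    apply Finset.sum_le_sum
    intro i hi
    have hij : i ≤ j := by simpa using Nat.lt_succ_iff.mp (Finset.mem_range.mp hi)
    have : j + 1 = i + (j + 1 - i) := by omega
    rw [this, pow_add, pow_add]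
    have hpow : x ^ (j+1-i) ≤ y ^ (j+1-i) := pow_le_pow_left₀ hx.le hxy.le _
    calc y ^ i * (x ^ i * x ^ (j+1-i)) = (x^i * y^i) * x^(j+1-i) := by ring
      _ ≤ (x^i * y^i) * y^(j+1-i) := by
          apply mul_le_mul_of_nonneg_left hpow
          positivity
      _ = x ^ i * (y ^ i * y ^ (j+1-i)) := by ring
  linarith

lemma aux_sq {e A : ℝ} (h : e^2 < A^2) (hA : 0 ≤ A) : -e < A := by nlinarith

-- strict abs lower bound for the quadratic factor
lemma quadbound (Q : ℝ) (hQ : 3 ≤ Q) (z : ℂ) (hz : z.re < ‖z‖) :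
    (Q+1) * ‖z‖ - (‖z‖)^2 - (Q-1)
      < ‖z^2 - ((Q:ℂ)+1) * z + ((Q:ℂ)-1)‖ := by
  set x := ‖z‖ with hxdef
  set a := z.re
  set b := z.im
  have hx0 : 0 ≤ x := norm_nonneg z
  have hb2 : b^2 = x^2 - a^2 := by
    have := Complex.sq_norm z
    rw [Complex.normSq_apply] at this
    simp only [← hxdef] at this
    nlinarith [this]
  set A := ‖z^2 - ((Q:ℂ)+1) * z + ((Q:ℂ)-1)‖ with hAdef
  have hA0 : 0 ≤ A := norm_nonneg _
  have hA2 : A^2 = (a^2 - b^2 - (Q+1)*a + (Q-1))^2 + (2*a*b - (Q+1)*b)^2 := by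
    rw [hAdef, Complex.sq_norm, Complex.normSq_apply]
    simp [Complex.add_re, Complex.add_im, Complex.sub_re, Complex.sub_im, Complex.mul_re,
      Complex.mul_im, Complex.ofReal_re, Complex.ofReal_im, pow_two]
    ring
  have e1 : (a^2 - b^2 - (Q+1)*a + (Q-1))^2 + (2*a*b - (Q+1)*b)^2
      = (2*a^2 - x^2 - (Q+1)*a + (Q-1))^2 + (x^2-a^2)*(2*a-(Q+1))^2 := by
    linear_combination ((2*a-(Q+1))^2 - (2*a^2 - b^2 - (x^2-a^2) - 2*((Q+1)*a-(Q-1)))) * hb2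
  have hbr : 0 < 2*(Q+1)*(x^2+Q-1) - 4*(Q-1)*(x+a) := by
    nlinarith [sq_nonneg ((Q+1)*x - 2*(Q-1)), sq_nonneg (Q-1), hz, hx0]
  have hD : (x^2 - (Q+1)*x + (Q-1))^2 < A^2 := by
    rw [hA2, e1]
    nlinarith [mul_pos (sub_pos.mpr hz) hbr]
  have := aux_sq hD hA0
  linarith

theorem qk_char_poly_dominant_root
    (q : ℤ) (k : ℕ) (hq : 3 ≤ q) (hk : 2 ≤ k) :
    ∃ γ : ℝ, 0 < γ ∧
      γ ^ k - (q : ℝ) * γ ^ (k - 1) - ∑ i ∈ Finset.range (k - 1), γ ^ i = 0 ∧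
      (∀ x : ℝ, 0 < x →
        x ^ k - (q : ℝ) * x ^ (k - 1) - ∑ i ∈ Finset.range (k - 1), x ^ i = 0 → x = γ) ∧
      (q : ℝ) < γ ∧ γ < (q : ℝ) + 1 ∧
      (∀ z : ℂ, z ^ k - (q : ℂ) * z ^ (k - 1) - ∑ i ∈ Finset.range (k - 1), z ^ i = 0 →
        z ≠ (γ : ℂ) → ‖z‖ < 1) := by
  obtain ⟨j, rfl⟩ : ∃ j, k = j + 2 := ⟨k - 2, by omega⟩
  have hk1 : j + 2 - 1 = j + 1 := by omega
  rw [hk1]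
  set Q : ℝ := (q : ℝ) with hQdef
  have hQ : (3:ℝ) ≤ Q := by rw [hQdef]; exact_mod_cast hq
  set f : ℝ → ℝ := fun x => x ^ (j+2) - Q * x ^ (j+1) - ∑ i ∈ range (j+1), x ^ i with hfdef
  have hcont : ContinuousOn f (Set.Icc Q (Q+1)) := by
    apply Continuous.continuousOn
    exact ((continuous_pow _).sub (continuous_const.mul (continuous_pow _))).sub
      (continuous_finset_sum _ fun i _ => continuous_pow i)
  have hfQ : f Q < 0 := by
    have h1 : (1:ℝ) ≤ ∑ i ∈ range (j+1), Q ^ i := by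
      have := Finset.single_le_sum (f := fun i => Q ^ i)
        (fun i _ => by positivity) (Finset.mem_range.mpr (Nat.succ_pos j))
      simpa using this
    have : f Q = -(∑ i ∈ range (j+1), Q ^ i) := by
      simp only [hfdef]; ring
    linarith
  have hfQ1 : 0 < f (Q+1) := by
    have hgs := geom_sum_mul (Q+1) (j+1)
    have hkey : Q * f (Q+1) = (Q-1) * (Q+1)^(j+1) + 1 := by
      simp only [hfdef]
      linear_combination (-1:ℝ) * hgs
    have hp : (0:ℝ) < (Q+1)^(j+1) := by positivity
    nlinarith
  obtain ⟨γ, hγmem, hγroot⟩ := intermediate_value_Ioo (by linarith : Q ≤ Q + 1) hcont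
    (Set.mem_Ioo.mpr ⟨hfQ, hfQ1⟩)
  obtain ⟨hγlo, hγhi⟩ := hγmem
  have hγpos : 0 < γ := by linarith
  -- uniqueness of positive root
  have huniq : ∀ x : ℝ, 0 < x → f x = 0 → x = γ := by
    intro x hx hfx
    rcases lt_trichotomy x γ with h | h | h
    · exfalso
      have h2 : f x * γ ^ (j+1) < f γ * x ^ (j+1) := mono Q j hx h
      rw [hfx, hγroot] at h2
      simp at h2
    · exact h
    · exfalso
      have h2 : f γ * x ^ (j+1) < f x * γ ^ (j+1) := mono Q j hγpos h
      rw [hfx, hγroot] at h2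
      simp at h2
  refine ⟨γ, hγpos, hγroot, huniq, hγlo, hγhi, ?_⟩
  -- complex roots
  intro z hz hzne
  by_contra hcon
  push_neg at hcon
  set x := ‖z‖ with hxdef
  have hx1 : (1:ℝ) ≤ x := hcon
  have hx0 : (0:ℝ) < x := by linarith
  -- Step A : f x ≤ 0
  have hQC : (q : ℂ) = ((Q:ℝ) : ℂ) := by push_cast [hQdef]; ring
  have hsplit : z ^ (j+2) = (Q:ℂ) * z ^ (j+1) + ∑ i ∈ range (j+1), z ^ i := by
    rw [← hQC]; linear_combination hz
  have hfx_le : f x ≤ 0 := by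
    have habs : x ^ (j+2) ≤ Q * x ^ (j+1) + ∑ i ∈ range (j+1), x ^ i := by
      calc x ^ (j+2) = ‖z ^ (j+2)‖ := by rw [norm_pow]
        _ = ‖(Q:ℂ) * z ^ (j+1) + ∑ i ∈ range (j+1), z ^ i‖ := by rw [hsplit]
        _ ≤ ‖(Q:ℂ) * z ^ (j+1)‖ + ‖∑ i ∈ range (j+1), z ^ i‖ :=
            norm_add_le _ _
        _ ≤ Q * x ^ (j+1) + ∑ i ∈ range (j+1), x ^ i := by
            apply add_le_add
            · rw [norm_mul, norm_pow, Complex.norm_real, Real.norm_eq_abs, abs_of_nonneg (by linarith : (0:ℝ) ≤ Q)]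
            · calc ‖∑ i ∈ range (j+1), z ^ i‖
                  ≤ ∑ i ∈ range (j+1), ‖z ^ i‖ :=
                    norm_sum_le _ _
                _ = ∑ i ∈ range (j+1), x ^ i := by simp [norm_pow, hxdef]
    simp only [hfdef]; linarith
  -- case : z is a nonneg real
  by_cases hzx : z = ((x:ℝ) : ℂ)
  · have : f x = 0 := by
      have h0 : ((f x : ℝ) : ℂ) = 0 := by
        simp only [hfdef]
        push_cast
        rw [← hzx, ← hQC]
        exact hz
      exact_mod_cast h0
    have := huniq x hx0 this
    exact hzne (by rw [hzx, this])
  · -- z not a nonneg real: z.re < x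
    have hrelt : z.re < x := by
      rcases lt_or_eq_of_le (Complex.re_le_norm z) with h | h
      · exact h
      · exfalso
        apply hzx
        have him : z.im = 0 := by
          have hsq := Complex.sq_norm z
          rw [Complex.normSq_apply] at hsq
          have : z.im ^ 2 = 0 := by nlinarith [hsq, h]
          exact pow_eq_zero_iff (n := 2) (by norm_num) |>.mp this
        apply Complex.ext
        · rw [hxdef]; exact h
        · simp [him]
    -- Step B
    have hzQ : z ^ (j+2) - ((Q:ℝ):ℂ) * z ^ (j+1) - ∑ i ∈ range (j+1), z ^ i = 0 := by
      rw [← hQC]; exact hz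
    have hC := keyid (R := ℂ) ((Q:ℝ):ℂ) z j
    rw [hzQ, mul_zero] at hC
    have hCeq : z ^ (j+1) * (z ^ 2 - ((Q:ℂ)+1) * z + ((Q:ℂ)-1)) = -1 := by
      linear_combination -hC
    have habs1 : x ^ (j+1) * ‖z ^ 2 - ((Q:ℂ)+1) * z + ((Q:ℂ)-1)‖ = 1 := by
      have := congrArg (‖·‖) hCeq
      rwa [norm_mul, norm_pow, norm_neg, norm_one] at this
    have hquad := quadbound Q hQ z hrelt
    rw [← hxdef] at hquad
    have hR : (x - 1) * f x = x ^ (j+1) * (x ^ 2 - (Q+1) * x + (Q-1)) + 1 :=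
      keyid (R := ℝ) Q x j
    have hstep : x ^ (j+1) * ((Q+1) * x - x^2 - (Q-1)) < 1 := by
      calc x ^ (j+1) * ((Q+1) * x - x^2 - (Q-1))
          < x ^ (j+1) * ‖z ^ 2 - ((Q:ℂ)+1) * z + ((Q:ℂ)-1)‖ := by
            apply mul_lt_mul_of_pos_left hquad (by positivity)
        _ = 1 := habs1
    -- x^(j+1) * ((Q+1)x - x² - (Q-1)) = 1 - (x-1) * f x
    have hid : x ^ (j+1) * ((Q+1) * x - x^2 - (Q-1)) = 1 - (x-1) * f x := by
      linear_combination hR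
    rw [hid] at hstep
    -- so (x-1) * f x > 0, but x ≥ 1 and f x ≤ 0
    nlinarith [mul_nonneg (by linarith : (0:ℝ) ≤ x - 1) (by linarith : (0:ℝ) ≤ -f x)]
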